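/- arXiv:math/0612337 — 3 statements merged into one kernel-verified Lean document; each statement's English description precedes it below -/
import Mathlib

section
/- Let W = (W_t)_{t≥0} be a standard Brownian motion, T > 0, and let a, b : [0,T] → ℝ be continuous functions with a(0) < 0 < b(0) and a(t) < b(t) for all t ∈ [0,T]. If (a_n) and (b_n) are sequences of piecewise linear functions on [0,T] with a_n → a and b_n → b uniformly on [0,T], then lim_{n→∞} P(a_n(t) < W_t < b_n(t) for all t ∈ [0,T]) = P(a(t) < W_t < b(t) for all t ∈ [0,T]). -/
open MeasureTheory ProbabilityTheory Filter Set

/-- A standard Brownian motion on `[0,∞)`: a process with (a.s.) continuous paths,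
`W 0 = 0` a.s., centered Gaussian increments of variance `t - u`, and independent
increments. -/
structure IsStandardBM {Ω : Type*} [MeasureSpace Ω] (W : ℝ → Ω → ℝ) : Prop where
  meas : ∀ t : ℝ, Measurable (W t)
  init : ∀ᵐ ω : Ω ∂ℙ, W 0 ω = 0
  cont : ∀ᵐ ω : Ω ∂ℙ, ContinuousOn (fun t => W t ω) (Set.Ici 0)
  gauss_incr : ∀ u t : ℝ, 0 ≤ u → u ≤ t →
    Measure.map (fun ω => W t ω - W u ω) ℙ = gaussianReal 0 (Real.toNNReal (t - u))
  indep_incr : ∀ (n : ℕ) (τ : Fin (n + 1) → ℝ), (∀ i, 0 ≤ τ i) → Monotone τ →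
    iIndepFun
      (fun i : Fin n => fun ω => W (τ i.succ) ω - W (τ i.castSucc) ω) ℙ

/-- `f` is piecewise linear on `[0, T]`: there is a finite partition of `[0, T]` on whose
open subintervals `f` is linear. -/
def PiecewiseLinearOn (T : ℝ) (f : ℝ → ℝ) : Prop :=
  ∃ n : ℕ, ∃ τ : Fin (n + 1) → ℝ, τ 0 = 0 ∧ τ (Fin.last n) = T ∧ StrictMono τ ∧
    ∀ i : Fin n, ∃ p q : ℝ, ∀ u ∈ Set.Ioo (τ i.castSucc) (τ i.succ), f u = p * u + q

open scoped ENNReal NNReal Real Topology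

namespace BCPAux


lemma pdf_sq_shift (v : ℝ≥0) (hv : v ≠ 0) (c x : ℝ) :
    gaussianPDFReal 0 v (x + c)
      = Real.sqrt (gaussianPDFReal 0 v x) *
        Real.sqrt (Real.exp (c ^ 2 / v) * gaussianPDFReal 0 v (x + 2 * c)) := by
  have hvpos : (0:ℝ) < v := lt_of_le_of_ne v.coe_nonneg (by exact_mod_cast hv.symm)
  rw [← Real.sqrt_mul (gaussianPDFReal_nonneg 0 v x)]
  rw [show gaussianPDFReal 0 v x * (Real.exp (c ^ 2 / v) * gaussianPDFReal 0 v (x + 2 * c))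
      = (gaussianPDFReal 0 v (x + c)) ^ 2 from ?_]
  · exact (Real.sqrt_sq (gaussianPDFReal_nonneg 0 v _)).symm
  · unfold gaussianPDFReal
    simp only [sub_zero]
    rw [mul_pow]
    rw [show (Real.sqrt (2 * Real.pi * v))⁻¹ * Real.exp (-x ^ 2 / (2 * v)) *
        (Real.exp (c ^ 2 / v) * ((Real.sqrt (2 * Real.pi * v))⁻¹ *
          Real.exp (-(x + 2 * c) ^ 2 / (2 * v))))
        = ((Real.sqrt (2 * Real.pi * v))⁻¹) ^ 2 *
          (Real.exp (-x ^ 2 / (2 * v)) * Real.exp (c ^ 2 / v) *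
            Real.exp (-(x + 2 * c) ^ 2 / (2 * v))) from by ring]
    rw [← Real.exp_add, ← Real.exp_add, sq (Real.exp (-(x + c) ^ 2 / (2 * (v:ℝ)))),
      ← Real.exp_add]
    congr 1
    field_simp
    ring


lemma ofReal_sqrt_rpow_two {a : ℝ} (ha : 0 ≤ a) :
    ENNReal.ofReal (Real.sqrt a) ^ (2:ℝ) = ENNReal.ofReal a := by
  rw [show ((2:ℝ)) = ((2:ℕ):ℝ) by norm_num, ENNReal.rpow_natCast, sq,
    ← ENNReal.ofReal_mul (Real.sqrt_nonneg a), Real.mul_self_sqrt ha]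

lemma gauss_shift {v : ℝ≥0} (hv : v ≠ 0) (c : ℝ) {A : Set ℝ} (hA : MeasurableSet A) :
    gaussianReal 0 v A ≤ ENNReal.ofReal (Real.exp (c ^ 2 / v)) ^ (1/2 : ℝ) *
      gaussianReal 0 v ((fun x => x + c) ⁻¹' A) ^ (1/2 : ℝ) := by
  have hA' : MeasurableSet ((fun x => x + c) ⁻¹' A) := hA.preimage (by fun_prop)
  set f : ℝ → ℝ≥0∞ := ((fun x => x + c) ⁻¹' A).indicator
      (fun x => ENNReal.ofReal (Real.sqrt (gaussianPDFReal 0 v x))) with hfdef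
  set g : ℝ → ℝ≥0∞ := fun x =>
      ENNReal.ofReal (Real.sqrt (Real.exp (c ^ 2 / v) * gaussianPDFReal 0 v (x + 2 * c)))
    with hgdef
  have hf : Measurable f := by
    apply Measurable.indicator _ hA'
    exact (measurable_gaussianPDFReal 0 v).sqrt.ennreal_ofReal
  have hg : Measurable g := by
    apply Measurable.ennreal_ofReal
    exact (((measurable_gaussianPDFReal 0 v).comp
      (by fun_prop : Measurable fun x : ℝ => x + 2*c)).const_mul _).sqrt
  have key : gaussianReal 0 v A = ∫⁻ x, (f * g) x := by
    rw [gaussianReal_apply _ hv A, ← lintegral_indicator hA,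
      ← lintegral_add_right_eq_self (fun x => A.indicator (gaussianPDF 0 v) x) c]
    congr 1
    funext x
    by_cases hx : x + c ∈ A
    · have hx' : x ∈ (fun x => x + c) ⁻¹' A := hx
      simp only [Pi.mul_apply, Set.indicator_of_mem hx, Set.indicator_of_mem hx', hfdef, hgdef,
        gaussianPDF]
      rw [pdf_sq_shift v hv c x, ENNReal.ofReal_mul (Real.sqrt_nonneg _)]
    · have hx' : x ∉ (fun x => x + c) ⁻¹' A := hx
      simp [Set.indicator_of_notMem hx, Set.indicator_of_notMem hx', hfdef]
  have conj2 : Real.HolderConjugate 2 2 := Real.HolderConjugate.two_two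
  have hCS := ENNReal.lintegral_mul_le_Lp_mul_Lq volume conj2 hf.aemeasurable hg.aemeasurable
  rw [key]
  refine le_trans hCS ?_
  have hfsq : ∫⁻ x, f x ^ (2:ℝ) = gaussianReal 0 v ((fun x => x + c) ⁻¹' A) := by
    have : ∀ x, f x ^ (2:ℝ) = ((fun x => x + c) ⁻¹' A).indicator (gaussianPDF 0 v) x := by
      intro x
      by_cases hx : x ∈ (fun x => x + c) ⁻¹' A
      · simp only [hfdef, Set.indicator_of_mem hx, gaussianPDF]
        exact ofReal_sqrt_rpow_two (gaussianPDFReal_nonneg 0 v x)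
      · simp [hfdef, Set.indicator_of_notMem hx, ENNReal.zero_rpow_of_pos]
    simp_rw [this]
    rw [lintegral_indicator hA', ← gaussianReal_apply _ hv]
  have hgsq : ∫⁻ x, g x ^ (2:ℝ) = ENNReal.ofReal (Real.exp (c ^ 2 / v)) := by
    have : ∀ x, g x ^ (2:ℝ)
        = ENNReal.ofReal (Real.exp (c ^ 2 / v)) * gaussianPDF (0 - 2*c) v x := by
      intro x
      simp only [hgdef, gaussianPDF]
      rw [ofReal_sqrt_rpow_two (mul_nonneg (Real.exp_pos _).le (gaussianPDFReal_nonneg 0 v _))]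
      rw [gaussianPDFReal_add x (2*c)]
      exact ENNReal.ofReal_mul (Real.exp_pos _).le
    simp_rw [this]
    rw [lintegral_const_mul _ (measurable_gaussianPDF _ v), lintegral_gaussianPDF_eq_one _ hv,
      mul_one]
  rw [hfsq, hgsq, mul_comm]


variable {Ω : Type*} [MeasureSpace Ω] [IsProbabilityMeasure (ℙ : Measure Ω)]
  {W : ℝ → Ω → ℝ}

lemma fdim_mono (hW : IsStandardBM W) {δ : ℝ} (hδ : 0 < δ) (m : ℕ)
    (t : Fin (m+1) → ℝ) (ht : ∀ i, δ ≤ t i) (hmono : Monotone t) (c : ℝ)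
    {B : Set (Fin (m+1) → ℝ)} (hB : MeasurableSet B) :
    ℙ {ω : Ω | (fun i => W (t i) ω) ∈ B}
      ≤ ENNReal.ofReal (Real.exp (c ^ 2 / δ)) ^ (1/2:ℝ) *
        ℙ {ω : Ω | (fun i => W (t i) ω + c) ∈ B} ^ (1/2:ℝ) := by
  classical
  set τ : Fin (m+2) → ℝ := Fin.cons 0 t with hτ
  have hτ0 : ∀ i, 0 ≤ τ i := by
    intro i
    refine Fin.cases ?_ ?_ i
    · simp [hτ]
    · intro j; simp only [hτ, Fin.cons_succ]; exact le_trans hδ.le (ht j)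
  have hτmono : Monotone τ := by
    rw [Fin.monotone_iff_le_succ]
    intro i
    refine Fin.cases ?_ ?_ i
    · simpa [hτ] using le_trans hδ.le (ht 0)
    · intro j
      rw [← Fin.succ_castSucc]
      simp only [hτ, Fin.cons_succ]
      exact hmono (Fin.castSucc_lt_succ (i := j)).le
  set X : Fin (m+1) → Ω → ℝ := fun i ω => W (τ i.succ) ω - W (τ i.castSucc) ω with hX
  have hXmeas : ∀ i, Measurable (X i) := fun i => (hW.meas _).sub (hW.meas _)
  have hindep := hW.indep_incr (m+1) τ hτ0 hτmono
  have hX0 : X 0 = fun ω => W (t 0) ω - W 0 ω := by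
    funext ω
    simp only [hX, hτ]
    norm_num
  have hvne : (t 0).toNNReal ≠ 0 := by
    simp only [ne_eq, Real.toNNReal_eq_zero, not_le]
    exact lt_of_lt_of_le hδ (ht 0)
  have hX0law : Measure.map (X 0) ℙ = gaussianReal 0 (t 0).toNNReal := by
    rw [hX0]
    have h := hW.gauss_incr 0 (t 0) le_rfl (le_trans hδ.le (ht 0))
    rwa [sub_zero] at h
  set Y : Ω → (Fin (m+1) → ℝ) := fun ω i => if i = 0 then 0 else X i ω with hY
  have hYmeas : Measurable Y := by
    apply measurable_pi_lambda
    intro i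
    by_cases h : i = 0
    · simp only [hY, h, if_true]; exact measurable_const
    · simp only [hY, h, if_false]; exact hXmeas i
  have hIF : IndepFun Y (X 0) ℙ := by
    have h2 := hindep.indepFun_finset ({0}ᶜ : Finset (Fin (m+1))) {0}
      disjoint_compl_left hXmeas
    have h3 := h2.comp
      (φ := fun v : (({0}ᶜ : Finset (Fin (m+1))) : Type _) → ℝ =>
        (fun i : Fin (m+1) => if h : i ∈ ({0}ᶜ : Finset (Fin (m+1))) then v ⟨i, h⟩ else 0))
      (ψ := fun v : (({0} : Finset (Fin (m+1))) : Type _) → ℝ => v ⟨0, by simp⟩)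
      (measurable_pi_lambda _ (fun i => by
        by_cases h : i ∈ ({0}ᶜ : Finset (Fin (m+1)))
        · simp only [h, dif_pos]; exact measurable_pi_apply _
        · simp only [h, dif_neg, not_false_iff]; exact measurable_const))
      (measurable_pi_apply _ : Measurable fun v : (({0} : Finset (Fin (m+1))) : Type _) → ℝ =>
        v ⟨0, by simp⟩)
    convert h3 using 1
    · funext ω i
      by_cases h : i = 0
      · simp [hY, h]
      · have hi : i ∈ ({0}ᶜ : Finset (Fin (m+1))) := by simpa using h
        simp [hY, h, Function.comp, hi, hX]
    · funext ω; rfl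
  have hjoint : Measure.map (fun ω => (Y ω, X 0 ω)) ℙ
      = (Measure.map Y ℙ).prod (Measure.map (X 0) ℙ) :=
    (indepFun_iff_map_prod_eq_prod_map_map hYmeas.aemeasurable
      (hXmeas 0).aemeasurable).mp hIF
  set ν := Measure.map Y ℙ with hν
  have hνprob : IsProbabilityMeasure ν := Measure.isProbabilityMeasure_map hYmeas.aemeasurable
  set μ0 := gaussianReal 0 (t 0).toNNReal with hμ0
  set L : (Fin (m+1) → ℝ) → (Fin (m+1) → ℝ) :=
    fun x i => ∑ j : Fin (m+1), if j ≤ i then x j else 0 with hL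
  have hLmeas : Measurable L := by
    apply measurable_pi_lambda
    intro i
    apply Finset.measurable_sum
    intro j _
    by_cases h : j ≤ i
    · simpa [h] using measurable_pi_apply j
    · simp [h]
  set u : (Fin (m+1) → ℝ) × ℝ → (Fin (m+1) → ℝ) :=
    fun p i => if i = 0 then p.2 else p.1 i with hu
  have humeas : Measurable u := by
    apply measurable_pi_lambda
    intro i
    by_cases h : i = 0
    · simp only [hu, h, if_true]; exact measurable_snd
    · simp only [hu, h, if_false]; exact (measurable_pi_apply i).comp measurable_fst
  have hXu : ∀ ω, (fun i => X i ω) = u (Y ω, X 0 ω) := by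
    intro ω; funext i
    by_cases h : i = 0
    · subst h; simp [hu, hY]
    · simp [hu, hY, h]
  have hrec : ∀ ω (i : Fin (m+1)), L (fun j => X j ω) i = W (t i) ω - W 0 ω := by
    intro ω i
    induction i using Fin.induction with
    | zero =>
      have h1 : ∀ j : Fin (m+1), (if j ≤ 0 then X j ω else 0)
          = if j = 0 then X 0 ω else 0 := by
        intro j
        by_cases h : j = 0
        · subst h; simp
        · simp [h, Fin.le_zero_iff]
      simp only [hL, h1, Finset.sum_ite_eq' Finset.univ (0 : Fin (m+1)), Finset.mem_univ,
        if_true]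
      rw [hX0]
    | succ j ih =>
      have hsplit : ∀ k : Fin (m+1), (if k ≤ j.succ then X k ω else 0)
          = (if k ≤ j.castSucc then X k ω else 0) + (if k = j.succ then X k ω else 0) := by
        intro k
        by_cases h1 : k ≤ j.castSucc
        · have h2 : k ≠ j.succ := by
            intro he
            exact absurd (he ▸ h1) (not_le.mpr (Fin.castSucc_lt_succ (i := j)))
          simp [h1, le_trans h1 (Fin.castSucc_lt_succ (i := j)).le, h2]
        · by_cases h2 : k = j.succ
          · simp [h1, h2]
          · have h3 : ¬ k ≤ j.succ := by
              intro hle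
              rcases lt_or_eq_of_le hle with h4 | h4
              · exact h1 (Fin.le_castSucc_iff.mpr h4)
              · exact h2 h4
            simp [h1, h2, h3]
      have hXsucc : X j.succ ω = W (t j.succ) ω - W (t j.castSucc) ω := by
        simp only [hX, hτ, Fin.cons_succ, ← Fin.succ_castSucc]
      simp only [hL] at ih ⊢
      rw [Finset.sum_congr rfl (fun k _ => hsplit k), Finset.sum_add_distrib, ih,
        Finset.sum_ite_eq' Finset.univ j.succ, if_pos (Finset.mem_univ _), hXsucc]
      ring
  have hLshift : ∀ (p : (Fin (m+1) → ℝ) × ℝ) (i : Fin (m+1)),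
      L (u (p.1, p.2 + c)) i = L (u p) i + c := by
    intro p i
    have h1 : ∀ j : Fin (m+1), (if j ≤ i then u (p.1, p.2 + c) j else 0)
        = (if j ≤ i then u p j else 0) + (if j = 0 then c else 0) := by
      intro j
      by_cases h : j = 0
      · subst h; simp [hu, Fin.zero_le]
      · simp [hu, h]
    simp only [hL]
    rw [Finset.sum_congr rfl (fun k _ => h1 k), Finset.sum_add_distrib,
      Finset.sum_ite_eq' Finset.univ (0 : Fin (m+1)), if_pos (Finset.mem_univ _)]
  set M : Set ((Fin (m+1) → ℝ) × ℝ) := {p | L (u p) ∈ B} with hM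
  have hMmeas : MeasurableSet M := (hLmeas.comp humeas) hB
  set M' : Set ((Fin (m+1) → ℝ) × ℝ) := {p | L (u (p.1, p.2 + c)) ∈ B} with hM'
  have hM'M : M' = (fun p : (Fin (m+1) → ℝ) × ℝ => (p.1, p.2 + c)) ⁻¹' M := rfl
  have hM'meas : MeasurableSet M' := by
    rw [hM'M]
    exact hMmeas.preimage (measurable_fst.prodMk (measurable_snd.add_const c))
  have hEq1 : ℙ {ω : Ω | (fun i => W (t i) ω) ∈ B}
      = ∫⁻ y, μ0 {x : ℝ | (y, x) ∈ M} ∂ν := by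
    have hae : {ω : Ω | (fun i => W (t i) ω) ∈ B}
        =ᵐ[ℙ] {ω : Ω | (Y ω, X 0 ω) ∈ M} := by
      filter_upwards [hW.init] with ω h0
      have heq : (fun i => W (t i) ω) = L (u (Y ω, X 0 ω)) := by
        funext i
        rw [← hXu ω, hrec ω i, h0, sub_zero]
      exact congrArg (· ∈ B) heq
    rw [measure_congr hae,
      show {ω : Ω | (Y ω, X 0 ω) ∈ M} = (fun ω => (Y ω, X 0 ω)) ⁻¹' M from rfl,
      ← Measure.map_apply (hYmeas.prodMk (hXmeas 0)) hMmeas, hjoint, hX0law,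
      Measure.prod_apply hMmeas]
    rfl
  have hEq2 : ℙ {ω : Ω | (fun i => W (t i) ω + c) ∈ B}
      = ∫⁻ y, μ0 {x : ℝ | (y, x) ∈ M'} ∂ν := by
    have hae : {ω : Ω | (fun i => W (t i) ω + c) ∈ B}
        =ᵐ[ℙ] {ω : Ω | (Y ω, X 0 ω) ∈ M'} := by
      filter_upwards [hW.init] with ω h0
      have heq : (fun i => W (t i) ω + c) = L (u ((Y ω, X 0 ω).1, (Y ω, X 0 ω).2 + c)) := by
        funext i
        rw [hLshift (Y ω, X 0 ω) i]
        congr 1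
        rw [← hXu ω, hrec ω i, h0, sub_zero]
      exact congrArg (· ∈ B) heq
    rw [measure_congr hae,
      show {ω : Ω | (Y ω, X 0 ω) ∈ M'} = (fun ω => (Y ω, X 0 ω)) ⁻¹' M' from rfl,
      ← Measure.map_apply (hYmeas.prodMk (hXmeas 0)) hM'meas, hjoint, hX0law,
      Measure.prod_apply hM'meas]
    rfl
  rw [hEq1, hEq2]
  have hsliceM : ∀ y, MeasurableSet {x : ℝ | (y, x) ∈ M} :=
    fun y => measurable_prodMk_left hMmeas
  have hslice' : ∀ y, {x : ℝ | (y, x) ∈ M'} = (fun x => x + c) ⁻¹' {x : ℝ | (y, x) ∈ M} := by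
    intro y; rfl
  have hmeas_h : Measurable (fun y => μ0 {x : ℝ | (y, x) ∈ M'}) :=
    measurable_measure_prodMk_left hM'meas
  have step1 : ∫⁻ y, μ0 {x : ℝ | (y, x) ∈ M} ∂ν
      ≤ ∫⁻ y, ENNReal.ofReal (Real.exp (c ^ 2 / ((t 0).toNNReal : ℝ))) ^ (1/2:ℝ) *
          μ0 {x : ℝ | (y, x) ∈ M'} ^ (1/2:ℝ) ∂ν := by
    apply lintegral_mono
    intro y
    have := gauss_shift hvne c (hsliceM y)
    rwa [← hslice' y] at this
  refine le_trans step1 ?_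
  rw [lintegral_const_mul _ (hmeas_h.pow_const _)]
  have hconst : ENNReal.ofReal (Real.exp (c ^ 2 / ((t 0).toNNReal : ℝ))) ^ (1/2:ℝ)
      ≤ ENNReal.ofReal (Real.exp (c ^ 2 / δ)) ^ (1/2:ℝ) := by
    apply ENNReal.rpow_le_rpow _ (by norm_num)
    apply ENNReal.ofReal_le_ofReal
    apply Real.exp_le_exp.mpr
    rw [Real.coe_toNNReal _ (le_trans hδ.le (ht 0))]
    exact div_le_div_of_nonneg_left (sq_nonneg c) hδ (ht 0)
  have hCS2 : ∫⁻ y, μ0 {x : ℝ | (y, x) ∈ M'} ^ (1/2:ℝ) ∂ν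
      ≤ (∫⁻ y, μ0 {x : ℝ | (y, x) ∈ M'} ∂ν) ^ (1/2:ℝ) := by
    have conj2 : Real.HolderConjugate 2 2 := Real.HolderConjugate.two_two
    have := ENNReal.lintegral_mul_le_Lp_mul_Lq ν conj2
      (f := fun y => μ0 {x : ℝ | (y, x) ∈ M'} ^ (1/2:ℝ)) (g := fun _ => 1)
      (hmeas_h.pow_const _).aemeasurable aemeasurable_const
    simp only [mul_one, ENNReal.one_rpow, lintegral_const, one_mul,
      measure_univ] at this
    have hpow : ∀ y, (μ0 {x : ℝ | (y, x) ∈ M'} ^ (1/2:ℝ)) ^ (2:ℝ)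
        = μ0 {x : ℝ | (y, x) ∈ M'} := by
      intro y
      rw [← ENNReal.rpow_mul]
      norm_num
    simp only [hpow] at this
    calc ∫⁻ y, μ0 {x : ℝ | (y, x) ∈ M'} ^ (1/2:ℝ) ∂ν
        = ∫⁻ y, (fun y => μ0 {x : ℝ | (y, x) ∈ M'} ^ (1/2:ℝ)) y * (1:ℝ≥0∞) ∂ν := by
          simp only [mul_one]
      _ ≤ (∫⁻ y, μ0 {x : ℝ | (y, x) ∈ M'} ∂ν) ^ (1/2:ℝ) := by
          refine le_trans this ?_
          simp
  calc ENNReal.ofReal (Real.exp (c ^ 2 / ((t 0).toNNReal : ℝ))) ^ (1/2:ℝ) *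
        ∫⁻ y, μ0 {x : ℝ | (y, x) ∈ M'} ^ (1/2:ℝ) ∂ν
      ≤ ENNReal.ofReal (Real.exp (c ^ 2 / δ)) ^ (1/2:ℝ) *
        (∫⁻ y, μ0 {x : ℝ | (y, x) ∈ M'} ∂ν) ^ (1/2:ℝ) :=
        mul_le_mul' hconst hCS2


lemma fdim (hW : IsStandardBM W) {δ : ℝ} (hδ : 0 < δ) (N : ℕ) (t : Fin N → ℝ)
    (ht : ∀ i, δ ≤ t i) (c : ℝ) {B : Set (Fin N → ℝ)} (hB : MeasurableSet B) :
    ℙ {ω : Ω | (fun i => W (t i) ω) ∈ B}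
      ≤ ENNReal.ofReal (Real.exp (c ^ 2 / δ)) ^ (1/2:ℝ) *
        ℙ {ω : Ω | (fun i => W (t i) ω + c) ∈ B} ^ (1/2:ℝ) := by
  have hK1 : (1:ℝ≥0∞) ≤ ENNReal.ofReal (Real.exp (c ^ 2 / δ)) ^ (1/2:ℝ) := by
    rw [show (1:ℝ≥0∞) = (1:ℝ≥0∞) ^ (1/2:ℝ) by simp]
    apply ENNReal.rpow_le_rpow _ (by norm_num)
    rw [show (1:ℝ≥0∞) = ENNReal.ofReal 1 by simp]
    exact ENNReal.ofReal_le_ofReal (Real.one_le_exp (div_nonneg (sq_nonneg c) hδ.le))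
  match N with
  | 0 =>
    have heq : {ω : Ω | (fun i => W (t i) ω) ∈ B}
        = {ω : Ω | (fun i => W (t i) ω + c) ∈ B} := by
      ext ω
      have : (fun i : Fin 0 => W (t i) ω) = (fun i : Fin 0 => W (t i) ω + c) := by
        funext i; exact i.elim0
      simp only [Set.mem_setOf_eq, this]
    rw [heq]
    calc ℙ {ω : Ω | (fun i => W (t i) ω + c) ∈ B}
        = ℙ {ω : Ω | (fun i => W (t i) ω + c) ∈ B} ^ (1:ℝ) := (ENNReal.rpow_one _).symm
      _ ≤ ℙ {ω : Ω | (fun i => W (t i) ω + c) ∈ B} ^ (1/2:ℝ) :=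
          ENNReal.rpow_le_rpow_of_exponent_ge prob_le_one (by norm_num)
      _ ≤ _ := le_mul_of_one_le_left (by simp) hK1
  | (m+1) =>
    set σ := Tuple.sort t with hσ
    set t' : Fin (m+1) → ℝ := t ∘ σ with ht'def
    have hmono : Monotone t' := Tuple.monotone_sort t
    have ht' : ∀ i, δ ≤ t' i := fun i => ht _
    set R : (Fin (m+1) → ℝ) → (Fin (m+1) → ℝ) := fun y j => y (σ.symm j) with hR
    have hRmeas : Measurable R :=
      measurable_pi_lambda _ (fun j => measurable_pi_apply _)
    have h1 : {ω : Ω | (fun i => W (t i) ω) ∈ B}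
        = {ω : Ω | (fun j => W (t' j) ω) ∈ R ⁻¹' B} := by
      ext ω
      have : (fun i => W (t i) ω) = R (fun j => W (t' j) ω) := by
        funext i
        simp only [hR, ht'def, Function.comp_apply, Equiv.apply_symm_apply]
      simp only [Set.mem_setOf_eq, Set.mem_preimage, this]
    have h2 : {ω : Ω | (fun i => W (t i) ω + c) ∈ B}
        = {ω : Ω | (fun j => W (t' j) ω + c) ∈ R ⁻¹' B} := by
      ext ω
      have : (fun i => W (t i) ω + c) = R (fun j => W (t' j) ω + c) := by
        funext i
        simp only [hR, ht'def, Function.comp_apply, Equiv.apply_symm_apply]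
      simp only [Set.mem_setOf_eq, Set.mem_preimage, this]
    rw [h1, h2]
    exact fdim_mono hW hδ m t' ht' hmono c (hRmeas hB)


lemma atom_zero (hW : IsStandardBM W) {δ : ℝ} (hδ : 0 < δ) (e : ℕ → ℝ)
    (he : ∀ n, δ ≤ e n) (α : ℕ → ℝ) (s : ℝ) (hs : s = 1 ∨ s = -1) :
    ℙ ((⋂ n, {ω : Ω | α n ≤ s * W (e n) ω}) ∩
        ⋂ j : ℕ, ⋃ n, {ω : Ω | s * W (e n) ω < α n + 1/(j+1)}) = 0 := by
  classical
  have hs2 : s * s = 1 := by rcases hs with h | h <;> rw [h] <;> norm_num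
  set Sev : ℝ → ℕ → Set Ω :=
    fun x N => ⋂ (n) (_ : n < N), {ω | α n - x ≤ s * W (e n) ω} with hSev
  set Sinf : ℝ → Set Ω := fun x => ⋂ n, {ω | α n - x ≤ s * W (e n) ω} with hSinf
  set Rfin : ℝ → ℕ → ℕ → Set Ω :=
    fun x j M => ⋃ (n) (_ : n < M), {ω | s * W (e n) ω < α n - x + 1/(j+1)} with hRfin
  set Rinf : ℝ → ℕ → Set Ω :=
    fun x j => ⋃ n, {ω | s * W (e n) ω < α n - x + 1/(j+1)} with hRinf
  set Ex : ℝ → Set Ω := fun x => Sinf x ∩ ⋂ j, Rinf x j with hEx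
  have hmeas1 : ∀ (r : ℝ) (n : ℕ), MeasurableSet {ω : Ω | r ≤ s * W (e n) ω} :=
    fun r n => measurableSet_le measurable_const ((hW.meas (e n)).const_mul s)
  have hmeas2 : ∀ (r : ℝ) (n : ℕ), MeasurableSet {ω : Ω | s * W (e n) ω < r} :=
    fun r n => measurableSet_lt ((hW.meas (e n)).const_mul s) measurable_const
  have hSevMeas : ∀ x N, MeasurableSet (Sev x N) :=
    fun x N => MeasurableSet.iInter fun n => MeasurableSet.iInter fun _ => hmeas1 _ n
  have hSinfMeas : ∀ x, MeasurableSet (Sinf x) :=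
    fun x => MeasurableSet.iInter fun n => hmeas1 _ n
  have hRfinMeas : ∀ x j M, MeasurableSet (Rfin x j M) :=
    fun x j M => MeasurableSet.iUnion fun n => MeasurableSet.iUnion fun _ => hmeas2 _ n
  have hRinfMeas : ∀ x j, MeasurableSet (Rinf x j) :=
    fun x j => MeasurableSet.iUnion fun n => hmeas2 _ n
  have hExMeas : ∀ x, MeasurableSet (Ex x) :=
    fun x => (hSinfMeas x).inter (MeasurableSet.iInter fun j => hRinfMeas x j)
  suffices hmain : ℙ (Ex 0) = 0 by
    have heq : (⋂ n, {ω : Ω | α n ≤ s * W (e n) ω}) ∩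
        (⋂ j : ℕ, ⋃ n, {ω : Ω | s * W (e n) ω < α n + 1/(j+1)}) = Ex 0 := by
      simp only [hEx, hSinf, hRinf, sub_zero]
    rw [heq, hmain]
  -- Step A : find a non-atom c ≠ 0
  have hdisj0 : ∀ x y : ℝ, x < y → Disjoint (Ex x) (Ex y) := by
    intro x y hxy
    rw [Set.disjoint_left]
    intro ω hx hy
    obtain ⟨j, hj⟩ := exists_nat_one_div_lt (show (0:ℝ) < y - x by linarith)
    obtain ⟨n, hn⟩ := Set.mem_iUnion.mp (Set.mem_iInter.mp hy.2 j)
    have h1 : α n - x ≤ s * W (e n) ω := Set.mem_iInter.mp hx.1 n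
    have h2 : s * W (e n) ω < α n - y + 1/(j+1) := hn
    have : (1:ℝ)/(j+1) < y - x := by exact_mod_cast hj
    linarith
  have hdisj : Pairwise (Function.onFun Disjoint Ex) := by
    intro x y hne
    rcases lt_or_gt_of_ne hne with h | h
    · exact hdisj0 x y h
    · exact (hdisj0 y x h).symm
  obtain ⟨c, hc0, hc⟩ : ∃ c : ℝ, c ≠ 0 ∧ ℙ (Ex c) = 0 := by
    by_contra hcon
    push_neg at hcon
    have hsub : (Set.univ : Set ℝ) ⊆ {x : ℝ | 0 < ℙ (Ex x)} ∪ {0} := by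
      intro x _
      by_cases hx : x = 0
      · exact Or.inr hx
      · exact Or.inl (pos_iff_ne_zero.mpr (hcon x hx))
    have hcnt : ({x : ℝ | 0 < ℙ (Ex x)} ∪ {0} : Set ℝ).Countable := by
      refine Set.Countable.union ?_ (Set.countable_singleton 0)
      exact MeasureTheory.Measure.countable_meas_pos_of_disjoint_of_meas_iUnion_ne_top
        (μ := ℙ) hExMeas hdisj (measure_ne_top ℙ _)
    exact Cardinal.not_countable_real (hcnt.mono hsub)
  -- Step B : finite-dimensional inequality
  set K : ℝ≥0∞ := ENNReal.ofReal (Real.exp (c ^ 2 / δ)) ^ (1/2:ℝ) with hK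
  have hKne : K ≠ ∞ := by
    apply ENNReal.rpow_ne_top_of_nonneg (by norm_num)
    exact ENNReal.ofReal_ne_top
  have key : ∀ N j M : ℕ, ℙ (Sev 0 N ∩ Rfin 0 j M) ≤ K * ℙ (Sev c N ∩ Rfin c j M) ^ (1/2:ℝ) := by
    intro N j M
    set P := max N M with hP
    set t : Fin P → ℝ := fun i => e i with htdef
    set B : Set (Fin P → ℝ) :=
      {y : Fin P → ℝ | (∀ i : Fin P, (i:ℕ) < N → α i - 0 ≤ s * y i) ∧
        (∃ i : Fin P, (i:ℕ) < M ∧ s * y i < α i - 0 + 1/(j+1))} with hB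
    have hBeq : B = (⋂ i : Fin P, {y : Fin P → ℝ | (i:ℕ) < N → α i - 0 ≤ s * y i}) ∩
        (⋃ i : Fin P, {y : Fin P → ℝ | (i:ℕ) < M ∧ s * y i < α i - 0 + 1/(j+1)}) := by
      ext y
      simp only [hB, Set.mem_setOf_eq, Set.mem_inter_iff, Set.mem_iInter, Set.mem_iUnion]
    have hBmeas : MeasurableSet B := by
      rw [hBeq]
      apply MeasurableSet.inter
      · refine MeasurableSet.iInter fun i => ?_
        by_cases hi : (i:ℕ) < N
        · simp only [hi, true_implies]
          exact measurableSet_le measurable_const (by fun_prop)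
        · simp only [hi, false_implies]
          exact MeasurableSet.univ
      · refine MeasurableSet.iUnion fun i => ?_
        by_cases hi : (i:ℕ) < M
        · simp only [hi, true_and]
          exact measurableSet_lt (by fun_prop) measurable_const
        · simp only [hi, false_and]
          exact MeasurableSet.empty
    have hEv1 : {ω : Ω | (fun i => W (t i) ω) ∈ B} = Sev 0 N ∩ Rfin 0 j M := by
      ext ω
      simp only [hB, Set.mem_setOf_eq, hSev, hRfin, Set.mem_inter_iff, Set.mem_iInter,
        Set.mem_iUnion, htdef]
      constructor
      · rintro ⟨h1, i, hi, h2⟩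
        exact ⟨fun n hn => h1 ⟨n, lt_of_lt_of_le hn (le_max_left N M)⟩ hn,
          ⟨(i:ℕ), hi, h2⟩⟩
      · rintro ⟨h1, n, hn, h2⟩
        refine ⟨fun i hi => h1 (i:ℕ) hi, ⟨⟨n, lt_of_lt_of_le hn (le_max_right N M)⟩, hn, h2⟩⟩
    have hEv2 : {ω : Ω | (fun i => W (t i) ω + s * c) ∈ B} = Sev c N ∩ Rfin c j M := by
      ext ω
      simp only [hB, Set.mem_setOf_eq, hSev, hRfin, Set.mem_inter_iff, Set.mem_iInter,
        Set.mem_iUnion, htdef]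
      have harr : ∀ (r : ℝ) (z : ℝ), (r - 0 ≤ s * (z + s * c)) ↔ (r - c ≤ s * z) := by
        intro r z
        rw [mul_add, ← mul_assoc, hs2, one_mul, sub_zero]
        constructor <;> intro h <;> linarith
      have harr2 : ∀ (r : ℝ) (z : ℝ) (q : ℝ), (s * (z + s * c) < r - 0 + q) ↔ (s * z < r - c + q) := by
        intro r z q
        rw [mul_add, ← mul_assoc, hs2, one_mul, sub_zero]
        constructor <;> intro h <;> linarith
      constructor
      · rintro ⟨h1, i, hi, h2⟩
        exact ⟨fun n hn => (harr _ _).mp (h1 ⟨n, lt_of_lt_of_le hn (le_max_left N M)⟩ hn),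
          ⟨(i:ℕ), hi, (harr2 _ _ _).mp h2⟩⟩
      · rintro ⟨h1, n, hn, h2⟩
        refine ⟨fun i hi => (harr _ _).mpr (h1 (i:ℕ) hi),
          ⟨⟨n, lt_of_lt_of_le hn (le_max_right N M)⟩, hn, (harr2 _ _ _).mpr h2⟩⟩
    have hfd := fdim hW hδ P t (fun i => he i) (s * c) hBmeas
    rw [hEv1, hEv2] at hfd
    have hsc : (s * c) ^ 2 = c ^ 2 := by
      rcases hs with h | h <;> rw [h] <;> ring
    rwa [hsc] at hfd
  -- Step C : pass to the limit
  have hstep : ∀ N : ℕ, ℙ (Ex 0) ≤ K * ℙ (Sev c N ∩ Rinf c N) ^ (1/2:ℝ) := by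
    intro N
    have hsub : Ex 0 ⊆ Sev 0 N ∩ Rinf 0 N := by
      intro ω hω
      exact ⟨Set.mem_iInter.mpr fun n => Set.mem_iInter.mpr fun _ =>
          Set.mem_iInter.mp hω.1 n,
        Set.mem_iInter.mp hω.2 N⟩
    have hun : Sev 0 N ∩ Rinf 0 N = ⋃ M, (Sev 0 N ∩ Rfin 0 N M) := by
      rw [← Set.inter_iUnion]
      congr 1
      ext ω
      simp only [hRinf, hRfin, Set.mem_iUnion]
      constructor
      · rintro ⟨n, hn⟩; exact ⟨n+1, n, Nat.lt_succ_self n, hn⟩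
      · rintro ⟨M, n, _, hn⟩; exact ⟨n, hn⟩
    have hmono : Monotone (fun M => Sev 0 N ∩ Rfin 0 N M) := by
      intro M M' hMM'
      apply Set.inter_subset_inter_right
      intro ω hω
      simp only [hRfin, Set.mem_iUnion] at hω ⊢
      obtain ⟨n, hn, h⟩ := hω
      exact ⟨n, lt_of_lt_of_le hn hMM', h⟩
    calc ℙ (Ex 0) ≤ ℙ (Sev 0 N ∩ Rinf 0 N) := measure_mono hsub
      _ = ⨆ M, ℙ (Sev 0 N ∩ Rfin 0 N M) := by rw [hun, hmono.measure_iUnion]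
      _ ≤ ⨆ M, K * ℙ (Sev c N ∩ Rfin c N M) ^ (1/2:ℝ) := iSup_mono fun M => key N N M
      _ ≤ K * ℙ (Sev c N ∩ Rinf c N) ^ (1/2:ℝ) := by
          refine iSup_le fun M => ?_
          refine mul_le_mul_right (ENNReal.rpow_le_rpow (measure_mono ?_) (by norm_num)) K
          apply Set.inter_subset_inter_right
          intro ω hω
          simp only [hRfin, hRinf, Set.mem_iUnion] at hω ⊢
          obtain ⟨n, _, h⟩ := hω
          exact ⟨n, h⟩
  have hanti : Antitone (fun N => Sev c N ∩ Rinf c N) := by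
    intro N N' hNN'
    apply Set.inter_subset_inter
    · intro ω hω
      simp only [hSev, Set.mem_iInter] at hω ⊢
      exact fun n hn => hω n (lt_of_lt_of_le hn hNN')
    · intro ω hω
      simp only [hRinf, Set.mem_iUnion] at hω ⊢
      obtain ⟨n, hn⟩ := hω
      have h2 : (1:ℝ)/(N'+1) ≤ 1/(N+1) := by
        apply one_div_le_one_div_of_le
        · positivity
        · have : (N:ℝ) ≤ (N':ℝ) := by exact_mod_cast hNN'
          linarith
      exact ⟨n, by simp only [Set.mem_setOf_eq] at hn ⊢; linarith⟩
  have hiInter : ⋂ N, (Sev c N ∩ Rinf c N) = Ex c := by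
    ext ω
    constructor
    · intro h
      have h' : ∀ N, ω ∈ Sev c N ∩ Rinf c N := Set.mem_iInter.mp h
      refine ⟨Set.mem_iInter.mpr fun n => ?_, Set.mem_iInter.mpr fun j => (h' j).2⟩
      have := (h' (n+1)).1
      simp only [hSev, Set.mem_iInter] at this
      exact this n (Nat.lt_succ_self n)
    · intro h
      refine Set.mem_iInter.mpr fun N => ⟨?_, Set.mem_iInter.mp h.2 N⟩
      simp only [hSev, Set.mem_iInter]
      exact fun n _ => Set.mem_iInter.mp h.1 n
  have hH : Tendsto (fun N => ℙ (Sev c N ∩ Rinf c N)) atTop (𝓝 0) := by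
    have h := tendsto_measure_iInter_atTop (μ := ℙ)
      (fun N => ((hSevMeas c N).inter (hRinfMeas c N)).nullMeasurableSet) hanti
      ⟨0, measure_ne_top ℙ _⟩
    rw [hiInter, hc] at h
    exact h
  have hlim : Tendsto (fun N => K * ℙ (Sev c N ∩ Rinf c N) ^ (1/2:ℝ)) atTop (𝓝 0) := by
    have h1 : Tendsto (fun N => ℙ (Sev c N ∩ Rinf c N) ^ (1/2:ℝ)) atTop (𝓝 0) := by
      have := hH.ennrpow_const (1/2:ℝ)
      rwa [ENNReal.zero_rpow_of_pos (by norm_num)] at this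
    have h2 := ENNReal.Tendsto.const_mul h1 (Or.inr hKne)
    rwa [mul_zero] at h2
  have hfinal : ℙ (Ex 0) ≤ 0 := ge_of_tendsto' hlim hstep
  exact le_antisymm hfinal (by simp)


lemma clip_mem {lo hi : ℝ} (h : lo ≤ hi) (x : ℝ) : max lo (min hi x) ∈ Set.Icc lo hi :=
  ⟨le_max_left _ _, max_le h (min_le_left _ _)⟩

lemma clip_lipschitz {lo hi : ℝ} (x y : ℝ) :
    |max lo (min hi x) - max lo (min hi y)| ≤ |x - y| := by
  calc |max lo (min hi x) - max lo (min hi y)|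
      = |max (min hi x) lo - max (min hi y) lo| := by rw [max_comm lo, max_comm lo]
    _ ≤ |min hi x - min hi y| := abs_max_sub_max_le_abs _ _ _
    _ ≤ max |hi - hi| |x - y| := abs_min_sub_min_le_max _ _ _ _
    _ = |x - y| := by simp

lemma clip_tendsto {lo hi : ℝ} (h : lo ≤ hi) (q : ℕ → ℚ) (hq : Function.Surjective q)
    {t : ℝ} (ht : t ∈ Set.Icc lo hi) :
    ∃ φ : ℕ → ℕ, Tendsto (fun k => max lo (min hi ((q (φ k) : ℝ)))) atTop
      (𝓝[Set.Icc lo hi] t) := by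
  have hsel : ∀ k : ℕ, ∃ n : ℕ, |max lo (min hi ((q n : ℝ))) - t| < 1/(k+1) := by
    intro k
    have h1 : (0:ℝ) < 1/(k+1) := by positivity
    obtain ⟨r, hr1, hr2⟩ := exists_rat_btwn (show t - 1/(k+1) < t + 1/(k+1) by linarith)
    obtain ⟨n, rfl⟩ := hq r
    refine ⟨n, lt_of_le_of_lt ?_ (show |(q n : ℝ) - t| < 1/(k+1) from abs_lt.mpr ⟨by linarith, by linarith⟩)⟩
    have hclip_t : max lo (min hi t) = t := by
      rw [min_eq_right ht.2, max_eq_right ht.1]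
    calc |max lo (min hi ((q n : ℝ))) - t| = |max lo (min hi ((q n : ℝ))) - max lo (min hi t)| := by
          rw [hclip_t]
      _ ≤ |(q n : ℝ) - t| := clip_lipschitz _ _
  choose φ hφ using hsel
  refine ⟨φ, ?_⟩
  apply tendsto_nhdsWithin_of_tendsto_nhds_of_eventually_within
  · rw [tendsto_iff_dist_tendsto_zero]
    apply squeeze_zero (fun k => dist_nonneg) (fun k => ?_)
      tendsto_one_div_add_atTop_nhds_zero_nat
    rw [Real.dist_eq]
    exact (hφ k).le
  · exact Filter.Eventually.of_forall fun k => clip_mem h _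

lemma ext_le {T : ℝ} (hT : 0 < T) (q : ℕ → ℚ) (hq : Function.Surjective q)
    {f g : ℝ → ℝ} (hf : ContinuousOn f (Set.Icc 0 T)) (hg : ContinuousOn g (Set.Icc 0 T))
    (h : ∀ n : ℕ, f (max 0 (min T ((q n : ℝ)))) ≤ g (max 0 (min T ((q n : ℝ)))))
    {t : ℝ} (ht : t ∈ Set.Icc 0 T) : f t ≤ g t := by
  obtain ⟨φ, hφ⟩ := clip_tendsto hT.le q hq ht
  have hft : Tendsto (fun k => f (max 0 (min T ((q (φ k) : ℝ))))) atTop (𝓝 (f t)) :=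
    ((hf t ht).tendsto).comp hφ
  have hgt : Tendsto (fun k => g (max 0 (min T ((q (φ k) : ℝ))))) atTop (𝓝 (g t)) :=
    ((hg t ht).tendsto).comp hφ
  exact le_of_tendsto_of_tendsto' hft hgt (fun k => h (φ k))

end BCPAux

/-- Convergence of two-sided boundary crossing probabilities for Brownian motion under
uniform approximation of the boundaries by piecewise linear functions. -/
theorem bcp_brownian_piecewise_linear_approximation
    {Ω : Type*} [MeasureSpace Ω] [IsProbabilityMeasure (ℙ : Measure Ω)]
    (W : ℝ → Ω → ℝ) (hW : IsStandardBM W)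
    (T : ℝ) (hT : 0 < T) (a b : ℝ → ℝ)
    (ha : ContinuousOn a (Set.Icc 0 T)) (hb : ContinuousOn b (Set.Icc 0 T))
    (ha0 : a 0 < 0) (hb0 : 0 < b 0)
    (hab : ∀ t ∈ Set.Icc (0 : ℝ) T, a t < b t)
    (an bn : ℕ → ℝ → ℝ)
    (han : ∀ n, PiecewiseLinearOn T (an n)) (hbn : ∀ n, PiecewiseLinearOn T (bn n))
    (hua : TendstoUniformlyOn an a atTop (Set.Icc 0 T))
    (hub : TendstoUniformlyOn bn b atTop (Set.Icc 0 T)) :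
    Filter.Tendsto
      (fun n => ℙ {ω : Ω | ∀ t ∈ Set.Icc (0 : ℝ) T, an n t < W t ω ∧ W t ω < bn n t})
      atTop (nhds (ℙ {ω : Ω | ∀ t ∈ Set.Icc (0 : ℝ) T, a t < W t ω ∧ W t ω < b t})) := by
  classical
  obtain ⟨q, hq⟩ := exists_surjective_nat ℚ
  set d : ℕ → ℝ := fun n => max 0 (min T ((q n : ℝ))) with hd
  have hdIcc : ∀ n, d n ∈ Set.Icc 0 T := fun n => BCPAux.clip_mem hT.le _
  have hWcont : ∀ᵐ ω : Ω ∂ℙ, ContinuousOn (fun t => W t ω) (Set.Icc 0 T) := by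
    filter_upwards [hW.cont] with ω h using h.mono (fun u hu => hu.1)
  set A : Set Ω := {ω : Ω | ∀ t ∈ Set.Icc (0:ℝ) T, a t < W t ω ∧ W t ω < b t} with hA
  set An : ℕ → Set Ω :=
    fun n => {ω : Ω | ∀ t ∈ Set.Icc (0:ℝ) T, an n t < W t ω ∧ W t ω < bn n t} with hAn
  show Filter.Tendsto (fun n => ℙ (An n)) atTop (𝓝 (ℙ A))
  set K' : ℕ → Set Ω := fun k => ⋂ n,
    {ω : Ω | a (d n) + 1/(k+1) ≤ W (d n) ω ∧ W (d n) ω ≤ b (d n) - 1/(k+1)} with hK'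
  set Kb : ℕ → Set Ω := fun k => ⋂ n,
    {ω : Ω | a (d n) - 1/(k+1) ≤ W (d n) ω ∧ W (d n) ω ≤ b (d n) + 1/(k+1)} with hKb
  set K : Set Ω := ⋂ n, {ω : Ω | a (d n) ≤ W (d n) ω ∧ W (d n) ω ≤ b (d n)} with hK
  have hmeas_pair : ∀ (r r' : ℝ) (n : ℕ),
      MeasurableSet {ω : Ω | r ≤ W (d n) ω ∧ W (d n) ω ≤ r'} := fun r r' n =>
    (measurableSet_le measurable_const (hW.meas _)).inter
      (measurableSet_le (hW.meas _) measurable_const)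
  have hK'meas : ∀ k, MeasurableSet (K' k) :=
    fun k => MeasurableSet.iInter fun n => hmeas_pair _ _ n
  have hKbmeas : ∀ k, MeasurableSet (Kb k) :=
    fun k => MeasurableSet.iInter fun n => hmeas_pair _ _ n
  rw [Metric.tendstoUniformlyOn_iff] at hua hub
  have hfrac_anti : ∀ {k k' : ℕ}, k ≤ k' → (1:ℝ)/(k'+1) ≤ 1/(k+1) := by
    intro k k' hkk'
    apply one_div_le_one_div_of_le (by positivity)
    have : (k:ℝ) ≤ (k':ℝ) := by exact_mod_cast hkk'
    linarith
  -- Step 1 : ℙ A ≤ liminf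
  have hliminf : ℙ A ≤ Filter.liminf (fun n => ℙ (An n)) atTop := by
    have hsub : ∀ᵐ ω ∂ℙ, ω ∈ A → ω ∈ ⋃ k, K' k := by
      filter_upwards [hWcont] with ω hcω hωA
      have hF1 : ContinuousOn (fun u => W u ω - a u) (Set.Icc 0 T) := hcω.sub ha
      have hF2 : ContinuousOn (fun u => b u - W u ω) (Set.Icc 0 T) := hb.sub hcω
      obtain ⟨t₁, ht₁, hmin₁⟩ :=
        isCompact_Icc.exists_isMinOn (Set.nonempty_Icc.mpr hT.le) hF1
      obtain ⟨t₂, ht₂, hmin₂⟩ :=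
        isCompact_Icc.exists_isMinOn (Set.nonempty_Icc.mpr hT.le) hF2
      have hm1 : 0 < W t₁ ω - a t₁ := sub_pos.mpr (hωA t₁ ht₁).1
      have hm2 : 0 < b t₂ - W t₂ ω := sub_pos.mpr (hωA t₂ ht₂).2
      obtain ⟨k, hk⟩ := exists_nat_one_div_lt (lt_min_iff.mpr ⟨hm1, hm2⟩)
      refine Set.mem_iUnion.mpr ⟨k, Set.mem_iInter.mpr fun n => ⟨?_, ?_⟩⟩
      · have h1 := isMinOn_iff.mp hmin₁ (d n) (hdIcc n)
        have h2 : (1:ℝ)/(k+1) ≤ W (d n) ω - a (d n) :=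
          le_trans (lt_of_lt_of_le hk (min_le_left _ _)).le h1
        linarith
      · have h1 := isMinOn_iff.mp hmin₂ (d n) (hdIcc n)
        have h2 : (1:ℝ)/(k+1) ≤ b (d n) - W (d n) ω :=
          le_trans (lt_of_lt_of_le hk (min_le_right _ _)).le h1
        linarith
    have hmono : Monotone K' := by
      intro k k' hkk' ω hω
      refine Set.mem_iInter.mpr fun n => ?_
      obtain ⟨h1, h2⟩ := Set.mem_iInter.mp hω n
      have := hfrac_anti hkk'
      exact ⟨by linarith, by linarith⟩
    have h1 : ℙ A ≤ ⨆ k, ℙ (K' k) := by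
      calc ℙ A ≤ ℙ (⋃ k, K' k) := measure_mono_ae hsub
        _ = ⨆ k, ℙ (K' k) := hmono.measure_iUnion
    refine le_trans h1 (iSup_le fun k => ?_)
    have hk1 : (0:ℝ) < 1/(k+1) := by positivity
    refine Filter.le_liminf_of_le (by isBoundedDefault) ?_
    filter_upwards [(hua _ hk1).and (hub _ hk1)] with n hn
    obtain ⟨hn1, hn2⟩ := hn
    refine measure_mono_ae ?_
    filter_upwards [hWcont] with ω hcω hωK'
    intro t ht
    have ha' : a t + 1/(k+1) ≤ W t ω :=
      BCPAux.ext_le hT q hq (ha.add continuousOn_const) hcω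
        (fun nn => (Set.mem_iInter.mp hωK' nn).1) ht
    have hb' : W t ω ≤ b t - 1/(k+1) :=
      BCPAux.ext_le hT q hq hcω (hb.sub continuousOn_const)
        (fun nn => (Set.mem_iInter.mp hωK' nn).2) ht
    have hd1 := hn1 t ht
    have hd2 := hn2 t ht
    rw [Real.dist_eq] at hd1 hd2
    obtain ⟨hd1a, hd1b⟩ := abs_lt.mp hd1
    obtain ⟨hd2a, hd2b⟩ := abs_lt.mp hd2
    exact ⟨by linarith, by linarith⟩
  -- Step 2 : limsup ≤ ℙ K
  have hKbAnti : Antitone Kb := by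
    intro k k' hkk' ω hω
    refine Set.mem_iInter.mpr fun n => ?_
    obtain ⟨h1, h2⟩ := Set.mem_iInter.mp hω n
    have := hfrac_anti hkk'
    exact ⟨by linarith, by linarith⟩
  have hKbInter : ⋂ k, Kb k = K := by
    ext ω
    simp only [hKb, hK, Set.mem_iInter]
    constructor
    · intro h n
      constructor
      · by_contra hcon
        push_neg at hcon
        obtain ⟨k, hk⟩ := exists_nat_one_div_lt (sub_pos.mpr hcon)
        have := (h k n).1
        linarith
      · by_contra hcon
        push_neg at hcon
        obtain ⟨k, hk⟩ := exists_nat_one_div_lt (sub_pos.mpr hcon)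
        have := (h k n).2
        linarith
    · intro h k n
      have hk1 : (0:ℝ) < 1/(k+1) := by positivity
      obtain ⟨h1, h2⟩ := h n
      exact ⟨by linarith, by linarith⟩
  have hKbTendsto : Tendsto (fun k => ℙ (Kb k)) atTop (𝓝 (ℙ K)) := by
    have h := tendsto_measure_iInter_atTop (μ := ℙ)
      (fun k => (hKbmeas k).nullMeasurableSet) hKbAnti ⟨0, measure_ne_top ℙ _⟩
    rwa [hKbInter] at h
  have hlimsupK : Filter.limsup (fun n => ℙ (An n)) atTop ≤ ℙ K := by
    refine ge_of_tendsto' hKbTendsto (fun k => ?_)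
    have hk1 : (0:ℝ) < 1/(k+1) := by positivity
    refine Filter.limsup_le_of_le (by isBoundedDefault) ?_
    filter_upwards [(hua _ hk1).and (hub _ hk1)] with n hn
    obtain ⟨hn1, hn2⟩ := hn
    refine measure_mono (fun ω hω => Set.mem_iInter.mpr fun nn => ?_)
    obtain ⟨hw1, hw2⟩ := hω (d nn) (hdIcc nn)
    have hd1 := hn1 (d nn) (hdIcc nn)
    have hd2 := hn2 (d nn) (hdIcc nn)
    rw [Real.dist_eq] at hd1 hd2
    obtain ⟨hd1a, hd1b⟩ := abs_lt.mp hd1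
    obtain ⟨hd2a, hd2b⟩ := abs_lt.mp hd2
    exact ⟨by linarith, by linarith⟩
  -- Step 3 : ℙ K ≤ ℙ A
  have hKlimA : ℙ K ≤ ℙ A := by
    -- choose a small time window on which a < a 0 / 2 and b > b 0 / 2
    obtain ⟨δb, hδb0, hδbT, hδba, hδbb⟩ : ∃ δb : ℝ, 0 < δb ∧ δb < T ∧
        (∀ u ∈ Set.Icc (0:ℝ) δb, a u < a 0 / 2) ∧
        (∀ u ∈ Set.Icc (0:ℝ) δb, b 0 / 2 < b u) := by
      have ha0' : ContinuousWithinAt a (Set.Icc 0 T) 0 :=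
        ha 0 (Set.left_mem_Icc.mpr hT.le)
      have hb0' : ContinuousWithinAt b (Set.Icc 0 T) 0 :=
        hb 0 (Set.left_mem_Icc.mpr hT.le)
      have heva : ∀ᶠ u in 𝓝[Set.Icc 0 T] 0, a u < a 0 / 2 :=
        ha0'.eventually_lt_const (by linarith)
      have hevb : ∀ᶠ u in 𝓝[Set.Icc 0 T] 0, b 0 / 2 < b u :=
        hb0'.eventually_const_lt (by linarith)
      obtain ⟨ε, hε0, hεsub⟩ := Metric.mem_nhdsWithin_iff.mp (heva.and hevb)
      refine ⟨min (ε/2) (T/2), by positivity, ?_, ?_, ?_⟩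
      · calc min (ε/2) (T/2) ≤ T/2 := min_le_right _ _
          _ < T := by linarith
      · intro u hu
        have hmem : u ∈ Metric.ball (0:ℝ) ε ∩ Set.Icc 0 T := by
          constructor
          · rw [Metric.mem_ball, Real.dist_eq, sub_zero, abs_of_nonneg hu.1]
            calc u ≤ min (ε/2) (T/2) := hu.2
              _ ≤ ε/2 := min_le_left _ _
              _ < ε := by linarith
          · exact ⟨hu.1, by
              calc u ≤ min (ε/2) (T/2) := hu.2
                _ ≤ T/2 := min_le_right _ _
                _ ≤ T := by linarith⟩
        exact (hεsub hmem).1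
      · intro u hu
        have hmem : u ∈ Metric.ball (0:ℝ) ε ∩ Set.Icc 0 T := by
          constructor
          · rw [Metric.mem_ball, Real.dist_eq, sub_zero, abs_of_nonneg hu.1]
            calc u ≤ min (ε/2) (T/2) := hu.2
              _ ≤ ε/2 := min_le_left _ _
              _ < ε := by linarith
          · exact ⟨hu.1, by
              calc u ≤ min (ε/2) (T/2) := hu.2
                _ ≤ T/2 := min_le_right _ _
                _ ≤ T := by linarith⟩
        exact (hεsub hmem).2
    -- the "early touching" events
    set L : ℕ → Set Ω := fun m => ⋃ n, ⋃ (_ : d n ≤ 1/(m+1)),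
      ({ω : Ω | W (d n) ω ≤ a 0 / 2} ∪ {ω : Ω | b 0 / 2 ≤ W (d n) ω}) with hLdef
    have hLmeas : ∀ m, MeasurableSet (L m) := fun m =>
      MeasurableSet.iUnion fun n => MeasurableSet.iUnion fun _ =>
        (measurableSet_le (hW.meas _) measurable_const).union
          (measurableSet_le measurable_const (hW.meas _))
    have hLanti : Antitone L := by
      intro m m' hmm' ω hω
      simp only [hLdef, Set.mem_iUnion] at hω ⊢
      obtain ⟨n, hn, h⟩ := hω
      exact ⟨n, le_trans hn (hfrac_anti hmm'), h⟩
    have hLlim : Tendsto (fun m => ℙ (L m)) atTop (𝓝 0) := by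
      have hint : ℙ (⋂ m, L m) = 0 := by
        have hae : ∀ᵐ ω ∂ℙ, ω ∉ ⋂ m, L m := by
          filter_upwards [hW.init, hW.cont] with ω h0 hcω hin
          set ρ := min (-(a 0)/2) (b 0 / 2) with hρ
          have hρ0 : 0 < ρ := lt_min (by linarith) (by linarith)
          have hcw0 : ContinuousWithinAt (fun u => W u ω) (Set.Ici 0) 0 :=
            hcω 0 Set.self_mem_Ici
          have htd : Tendsto (fun u => W u ω) (𝓝[Set.Ici 0] 0) (𝓝 0) := by
            have := hcw0.tendsto
            rwa [h0] at this
          have hev : ∀ᶠ u in 𝓝[Set.Ici 0] 0, |W u ω| < ρ := by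
            have habs : Tendsto (fun u => |W u ω|) (𝓝[Set.Ici 0] 0) (𝓝 |(0:ℝ)|) := htd.abs
            rw [abs_zero] at habs
            exact habs.eventually_lt_const hρ0
          obtain ⟨η, hη0, hηsub⟩ := Metric.mem_nhdsWithin_iff.mp hev
          obtain ⟨m, hm⟩ := exists_nat_one_div_lt hη0
          have hmem := Set.mem_iInter.mp hin m
          simp only [hLdef, Set.mem_iUnion] at hmem
          obtain ⟨n, hn, hw⟩ := hmem
          have hball : d n ∈ Metric.ball (0:ℝ) η ∩ Set.Ici 0 := by
            constructor
            · rw [Metric.mem_ball, Real.dist_eq, sub_zero, abs_of_nonneg (hdIcc n).1]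
              linarith
            · exact (hdIcc n).1
          have hsmall := hηsub hball
          simp only [Set.mem_setOf_eq] at hsmall
          obtain ⟨hl, hr⟩ := abs_lt.mp hsmall
          rcases hw with hw | hw
          · simp only [Set.mem_setOf_eq] at hw
            have : ρ ≤ -(a 0)/2 := min_le_left _ _
            linarith
          · simp only [Set.mem_setOf_eq] at hw
            have : ρ ≤ b 0 / 2 := min_le_right _ _
            linarith
        have hle : ℙ (⋂ m, L m) ≤ ℙ (∅ : Set Ω) := by
          refine measure_mono_ae ?_
          filter_upwards [hae] with ω h hmem
          exact absurd hmem h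
        simpa using hle
      have h := tendsto_measure_iInter_atTop (μ := ℙ)
        (fun m => (hLmeas m).nullMeasurableSet) hLanti ⟨0, measure_ne_top ℙ _⟩
      rwa [hint] at h
    -- main estimate for fixed m
    have hKA : ∀ m : ℕ, (1:ℝ)/(m+1) ≤ δb → ℙ K ≤ ℙ A + ℙ (L m) := by
      intro m hmδ
      set δ : ℝ := 1/(m+1) with hδdef
      have hδ0 : (0:ℝ) < δ := by positivity
      have hδT : δ ≤ T := le_trans hmδ hδbT.le
      set e : ℕ → ℝ := fun n => max δ (min T ((q n : ℝ))) with hedef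
      have heIcc : ∀ n, e n ∈ Set.Icc δ T := fun n => BCPAux.clip_mem hδT _
      have heIcc0T : ∀ n, e n ∈ Set.Icc 0 T :=
        fun n => ⟨le_trans hδ0.le (heIcc n).1, (heIcc n).2⟩
      set Ea : Set Ω := (⋂ n, {ω : Ω | a (e n) ≤ 1 * W (e n) ω}) ∩
        ⋂ j : ℕ, ⋃ n, {ω : Ω | 1 * W (e n) ω < a (e n) + 1/(j+1)} with hEadef
      set Eb : Set Ω := (⋂ n, {ω : Ω | -(b (e n)) ≤ (-1) * W (e n) ω}) ∩
        ⋂ j : ℕ, ⋃ n, {ω : Ω | (-1) * W (e n) ω < -(b (e n)) + 1/(j+1)} with hEbdef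
      have hEa0 : ℙ Ea = 0 :=
        BCPAux.atom_zero hW hδ0 e (fun n => (heIcc n).1) (fun n => a (e n)) 1 (Or.inl rfl)
      have hEb0 : ℙ Eb = 0 :=
        BCPAux.atom_zero hW hδ0 e (fun n => (heIcc n).1) (fun n => -(b (e n))) (-1)
          (Or.inr rfl)
      have hsubIcc : Set.Icc δ T ⊆ Set.Icc (0:ℝ) T := fun u hu => ⟨le_trans hδ0.le hu.1, hu.2⟩
      have hclaim : ∀ᵐ ω ∂ℙ, ω ∈ K → ω ∈ A ∪ (L m ∪ (Ea ∪ Eb)) := by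
        filter_upwards [hWcont] with ω hcω hωK
        by_contra hnot
        simp only [Set.mem_union, not_or] at hnot
        obtain ⟨hnA, hnL, hnEa, hnEb⟩ := hnot
        have hbound : ∀ t ∈ Set.Icc (0:ℝ) T, a t ≤ W t ω ∧ W t ω ≤ b t := by
          intro t ht
          constructor
          · exact BCPAux.ext_le hT q hq ha hcω
              (fun n => (Set.mem_iInter.mp hωK n).1) ht
          · exact BCPAux.ext_le hT q hq hcω hb
              (fun n => (Set.mem_iInter.mp hωK n).2) ht
        have htouch : ∃ t₀ ∈ Set.Icc (0:ℝ) T, W t₀ ω = a t₀ ∨ W t₀ ω = b t₀ := by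
          have hnA' : ¬ ∀ t ∈ Set.Icc (0:ℝ) T, a t < W t ω ∧ W t ω < b t := hnA
          push_neg at hnA'
          obtain ⟨t₀, ht₀, hbad⟩ := hnA'
          refine ⟨t₀, ht₀, ?_⟩
          by_cases h : a t₀ < W t₀ ω
          · exact Or.inr (le_antisymm (hbound t₀ ht₀).2 (hbad h))
          · exact Or.inl (le_antisymm (not_lt.mp h) (hbound t₀ ht₀).1)
        obtain ⟨t₀, ht₀, hcase⟩ := htouch
        rcases hcase with htc | htc
        · by_cases ht₀δ : t₀ < δ
          · apply hnL
            have ht₀δb : t₀ ∈ Set.Icc (0:ℝ) δb := ⟨ht₀.1, le_trans ht₀δ.le hmδ⟩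
            have hWt₀ : W t₀ ω < a 0 / 2 := by
              rw [htc]; exact hδba t₀ ht₀δb
            obtain ⟨φ, hφ⟩ := BCPAux.clip_tendsto hT.le q hq ht₀
            have htend : Tendsto (fun k => W (d (φ k)) ω) atTop (𝓝 (W t₀ ω)) :=
              ((hcω t₀ ht₀).tendsto).comp hφ
            have hev1 : ∀ᶠ k in atTop, W (d (φ k)) ω < a 0 / 2 :=
              htend.eventually_lt_const hWt₀
            have hφ' : Tendsto (fun k => d (φ k)) atTop (𝓝 t₀) :=
              hφ.mono_right nhdsWithin_le_nhds
            have hev2 : ∀ᶠ k in atTop, d (φ k) < δ := hφ'.eventually_lt_const ht₀δ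
            obtain ⟨k, h1, h2⟩ := (hev1.and hev2).exists
            simp only [hLdef, Set.mem_iUnion]
            exact ⟨φ k, h2.le, Or.inl h1.le⟩
          · apply hnEa
            push_neg at ht₀δ
            have ht₀' : t₀ ∈ Set.Icc δ T := ⟨ht₀δ, ht₀.2⟩
            constructor
            · refine Set.mem_iInter.mpr fun n => ?_
              simp only [Set.mem_setOf_eq, one_mul]
              exact (hbound (e n) (heIcc0T n)).1
            · refine Set.mem_iInter.mpr fun j => ?_
              obtain ⟨φ, hφ⟩ := BCPAux.clip_tendsto hδT q hq ht₀'
              have hWc' : ContinuousOn (fun u => W u ω - a u) (Set.Icc δ T) :=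
                (hcω.mono hsubIcc).sub (ha.mono hsubIcc)
              have htend : Tendsto (fun k => W (e (φ k)) ω - a (e (φ k))) atTop
                  (𝓝 (W t₀ ω - a t₀)) := ((hWc' t₀ ht₀').tendsto).comp hφ
              have h0 : W t₀ ω - a t₀ < 1/(j+1) := by
                rw [htc, sub_self]; positivity
              obtain ⟨k, hk⟩ := (htend.eventually_lt_const h0).exists
              refine Set.mem_iUnion.mpr ⟨φ k, ?_⟩
              simp only [Set.mem_setOf_eq, one_mul]
              linarith
        · by_cases ht₀δ : t₀ < δ
          · apply hnL
            have ht₀δb : t₀ ∈ Set.Icc (0:ℝ) δb := ⟨ht₀.1, le_trans ht₀δ.le hmδ⟩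
            have hWt₀ : b 0 / 2 < W t₀ ω := by
              rw [htc]; exact hδbb t₀ ht₀δb
            obtain ⟨φ, hφ⟩ := BCPAux.clip_tendsto hT.le q hq ht₀
            have htend : Tendsto (fun k => W (d (φ k)) ω) atTop (𝓝 (W t₀ ω)) :=
              ((hcω t₀ ht₀).tendsto).comp hφ
            have hev1 : ∀ᶠ k in atTop, b 0 / 2 < W (d (φ k)) ω :=
              htend.eventually_const_lt hWt₀
            have hφ' : Tendsto (fun k => d (φ k)) atTop (𝓝 t₀) :=
              hφ.mono_right nhdsWithin_le_nhds
            have hev2 : ∀ᶠ k in atTop, d (φ k) < δ := hφ'.eventually_lt_const ht₀δ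
            obtain ⟨k, h1, h2⟩ := (hev1.and hev2).exists
            simp only [hLdef, Set.mem_iUnion]
            exact ⟨φ k, h2.le, Or.inr h1.le⟩
          · apply hnEb
            push_neg at ht₀δ
            have ht₀' : t₀ ∈ Set.Icc δ T := ⟨ht₀δ, ht₀.2⟩
            constructor
            · refine Set.mem_iInter.mpr fun n => ?_
              simp only [Set.mem_setOf_eq, neg_mul, one_mul, neg_le_neg_iff]
              exact (hbound (e n) (heIcc0T n)).2
            · refine Set.mem_iInter.mpr fun j => ?_
              obtain ⟨φ, hφ⟩ := BCPAux.clip_tendsto hδT q hq ht₀'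
              have hWc' : ContinuousOn (fun u => b u - W u ω) (Set.Icc δ T) :=
                (hb.mono hsubIcc).sub (hcω.mono hsubIcc)
              have htend : Tendsto (fun k => b (e (φ k)) - W (e (φ k)) ω) atTop
                  (𝓝 (b t₀ - W t₀ ω)) := ((hWc' t₀ ht₀').tendsto).comp hφ
              have h0 : b t₀ - W t₀ ω < 1/(j+1) := by
                rw [htc, sub_self]; positivity
              obtain ⟨k, hk⟩ := (htend.eventually_lt_const h0).exists
              refine Set.mem_iUnion.mpr ⟨φ k, ?_⟩
              simp only [Set.mem_setOf_eq, neg_mul, one_mul]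
              linarith
      calc ℙ K ≤ ℙ (A ∪ (L m ∪ (Ea ∪ Eb))) := measure_mono_ae hclaim
        _ ≤ ℙ A + ℙ (L m ∪ (Ea ∪ Eb)) := measure_union_le _ _
        _ ≤ ℙ A + (ℙ (L m) + ℙ (Ea ∪ Eb)) :=
            add_le_add_right (measure_union_le _ _) _
        _ ≤ ℙ A + (ℙ (L m) + (ℙ Ea + ℙ Eb)) :=
            by gcongr; exact measure_union_le _ _
        _ = ℙ A + ℙ (L m) := by rw [hEa0, hEb0]; simp
    have htend2 : Tendsto (fun m => ℙ A + ℙ (L m)) atTop (𝓝 (ℙ A + 0)) :=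
      tendsto_const_nhds.add hLlim
    rw [add_zero] at htend2
    refine ge_of_tendsto htend2 ?_
    obtain ⟨m₀, hm₀⟩ := exists_nat_one_div_lt hδb0
    filter_upwards [Filter.eventually_ge_atTop m₀] with m hm
    exact hKA m (le_trans (hfrac_anti hm) hm₀.le)
  -- conclusion
  have h2 : Filter.limsup (fun n => ℙ (An n)) atTop ≤ ℙ A := le_trans hlimsupK hKlimA
  have h3 : Filter.liminf (fun n => ℙ (An n)) atTop
      ≤ Filter.limsup (fun n => ℙ (An n)) atTop := Filter.liminf_le_limsup
  exact tendsto_of_liminf_eq_limsup (le_antisymm (le_trans h3 h2) hliminf)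
    (le_antisymm h2 (le_trans hliminf h3)) (by isBoundedDefault) (by isBoundedDefault)
end

section
/- (G-class.) Let σ̃ : [0,∞) → (0,∞) be continuously differentiable and let σ(t,x) = σ̃(t)·x for (t,x) ∈ [0,∞) × (0,∞). Let μ : [0,∞) × (0,∞) → ℝ be once continuously differentiable in t and twice in x. Then μ and σ satisfy the partial differential equation ∂/∂x [ (1/σ) · ∂σ/∂t + σ · ∂/∂x ( (1/2) · ∂σ/∂x − μ/σ ) ] = 0 for all (t,x) ∈ [0,∞) × (0,∞) if and only if there exist functions α, β : [0,∞) → ℝ such that μ(t,x) = α(t)x + β(t)·x·log x for all (t,x) ∈ [0,∞) × (0,∞). -/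
open Real

lemma const_on_Ioi {f : ℝ → ℝ} (hf : DifferentiableOn ℝ f (Set.Ioi 0))
    (hf' : ∀ x ∈ Set.Ioi (0:ℝ), deriv f x = 0) {x : ℝ} (hx : x ∈ Set.Ioi (0:ℝ)) :
    f x = f 1 := by
  apply (convex_Ioi (0:ℝ)).is_const_of_fderivWithin_eq_zero hf _ hx (by norm_num)
  intro y hy
  rw [fderivWithin_of_isOpen isOpen_Ioi hy]
  ext
  simpa using hf' y hy


/-- G-class: for a diffusion coefficient `σ(t,x) = σ̃(t)·x` on the state space `(0,∞)`,
the reducibility PDE holds if and only if the drift has the form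
`μ(t,x) = α(t)x + β(t)·x·log x`. -/
theorem pde_G_class
    (σt : ℝ → ℝ) (hσt : ContDiff ℝ 1 σt) (hσt_pos : ∀ t : ℝ, 0 < σt t)
    (σ : ℝ → ℝ → ℝ) (hσ : ∀ t x : ℝ, σ t x = σt t * x)
    (μ : ℝ → ℝ → ℝ)
    (hμt : ∀ x : ℝ, 0 < x → ContDiff ℝ 1 fun t => μ t x)
    (hμx : ∀ t : ℝ, ContDiffOn ℝ 2 (μ t) (Set.Ioi 0)) :
    (∀ t x : ℝ, 0 < x →
        deriv (fun y =>
          (1 / σ t y) * deriv (fun u => σ u y) t +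
            σ t y * deriv (fun z => (1 / 2) * deriv (σ t) z - μ t z / σ t z) y) x = 0) ↔
      (∃ α β : ℝ → ℝ, ∀ t x : ℝ, 0 < x →
        μ t x = α t * x + β t * x * Real.log x) := by
  have hσne : ∀ t, σt t ≠ 0 := fun t => (hσt_pos t).ne'
  set G : ℝ → ℝ → ℝ := fun t z => μ t z / z with hG
  -- G is C² on Ioi 0
  have hGc2 : ∀ t, ContDiffOn ℝ 2 (G t) (Set.Ioi 0) := by
    intro t
    exact (hμx t).div contDiffOn_id (fun x hx => ne_of_gt hx)
  have hGdiff : ∀ t, ∀ y : ℝ, 0 < y → DifferentiableAt ℝ (G t) y := by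
    intro t y hy
    exact ((hGc2 t).differentiableOn (by norm_num) y hy).differentiableAt
      (isOpen_Ioi.mem_nhds hy)
  -- deriv (G t) is C¹ on Ioi 0
  have hG'c1 : ∀ t, ContDiffOn ℝ 1 (deriv (G t)) (Set.Ioi 0) := by
    intro t
    exact (hGc2 t).deriv_of_isOpen isOpen_Ioi (by norm_num)
  -- the expression simplifies on Ioi 0
  have hF : ∀ t y : ℝ, 0 < y →
      (1 / σ t y) * deriv (fun u => σ u y) t +
        σ t y * deriv (fun z => (1 / 2) * deriv (σ t) z - μ t z / σ t z) y
      = deriv σt t / σt t - y * deriv (G t) y := by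
    intro t y hy
    have h1 : deriv (fun u => σ u y) t = deriv σt t * y := by
      have : (fun u => σ u y) = fun u => σt u * y := funext fun u => hσ u y
      rw [this, deriv_mul_const (hσt.differentiable one_ne_zero t)]
    have hσderiv : ∀ z : ℝ, deriv (σ t) z = σt t := by
      intro z
      have : σ t = fun w => σt t * w := funext fun w => hσ t w
      rw [this]
      simpa using ((hasDerivAt_id z).const_mul (σt t)).deriv
    have h2 : (fun z => (1 / 2) * deriv (σ t) z - μ t z / σ t z)
        = fun z => (1 / 2) * σt t - (σt t)⁻¹ * G t z := by
      funext z
      rw [hσderiv z, hσ t z, hG]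
      simp only [div_eq_mul_inv, mul_inv]
      ring
    have h3 : deriv (fun z => (1 / 2) * deriv (σ t) z - μ t z / σ t z) y
        = -((σt t)⁻¹ * deriv (G t) y) := by
      rw [h2]
      have hd := (hGdiff t y hy).hasDerivAt
      have := ((hasDerivAt_const y ((1:ℝ)/2 * σt t)).sub (hd.const_mul ((σt t)⁻¹))).deriv
      simpa using this
    have hy' : y ≠ 0 := ne_of_gt hy
    have e1 : 1 / (σt t * y) * (deriv σt t * y) = deriv σt t / σt t := by
      field_simp
    have e2 : σt t * y * -((σt t)⁻¹ * deriv (G t) y) = -(y * deriv (G t) y) := by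
      field_simp
      rw [mul_div_cancel_left₀ _ (hσne t)]
    rw [h1, h3, hσ t y, e1, e2]
    ring
  constructor
  · -- PDE ⇒ form
    intro hpde
    refine ⟨fun t => μ t 1, fun t => deriv (G t) 1, fun t x hx => ?_⟩
    -- deriv of y * deriv (G t) y vanishes
    have key : ∀ y : ℝ, 0 < y → deriv (fun w => w * deriv (G t) w) y = 0 := by
      intro y hy
      have hev : (fun w =>
          (1 / σ t w) * deriv (fun u => σ u w) t +
            σ t w * deriv (fun z => (1 / 2) * deriv (σ t) z - μ t z / σ t z) w)
          =ᶠ[nhds y] fun w => deriv σt t / σt t - w * deriv (G t) w := by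
        filter_upwards [isOpen_Ioi.mem_nhds hy] with w hw
        exact hF t w hw
      have := hpde t y hy
      rw [hev.deriv_eq, deriv_const_sub] at this
      linarith
    -- so y * deriv (G t) y is constant on Ioi 0
    have hhd : DifferentiableOn ℝ (fun w => w * deriv (G t) w) (Set.Ioi 0) :=
      differentiableOn_id.mul ((hG'c1 t).differentiableOn one_ne_zero)
    have hconst : ∀ y : ℝ, 0 < y →
        y * deriv (G t) y = 1 * deriv (G t) 1 :=
      fun y hy => const_on_Ioi hhd (fun w hw => key w hw) hy
    set β := deriv (G t) 1 with hβ
    have hG' : ∀ y : ℝ, 0 < y → deriv (G t) y = β * y⁻¹ := by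
      intro y hy
      have := hconst y hy
      field_simp at this ⊢
      linarith
    -- G t y - β * log y is constant
    have hk : ∀ y : ℝ, 0 < y → G t y - β * Real.log y = G t 1 - β * Real.log 1 := by
      intro y hy
      apply const_on_Ioi (f := fun w => G t w - β * Real.log w)
      · intro w hw
        exact ((hGc2 t).differentiableOn (by norm_num) w hw).sub
          ((differentiableAt_const β).mul
            (Real.differentiableAt_log (ne_of_gt hw))).differentiableWithinAt
      · intro w hw
        have hd1 := (hGdiff t w hw).hasDerivAt
        have hd2 := ((Real.hasDerivAt_log (ne_of_gt hw)).const_mul β)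
        have : deriv (fun w => G t w - β * Real.log w) w = deriv (G t) w - β * w⁻¹ :=
          (hd1.sub hd2).deriv
        rw [this, hG' w hw]
        ring
      · exact hy
    have hx' := hk x hx
    rw [Real.log_one, mul_zero, sub_zero] at hx'
    have hGx : G t x = G t 1 + β * Real.log x := by linarith
    have : μ t x = x * G t x := by
      rw [hG]
      field_simp
    rw [this, hGx, hG]
    simp only [div_one]
    ring
  · -- form ⇒ PDE
    rintro ⟨α, β, hform⟩ t x hx
    -- on Ioi 0, G t z = α t + β t * log z
    have hGeq : ∀ z : ℝ, 0 < z → G t z = α t + β t * Real.log z := by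
      intro z hz
      rw [hG]
      simp only
      rw [hform t z hz]
      field_simp
    have hG'eq : ∀ y : ℝ, 0 < y → deriv (G t) y = β t * y⁻¹ := by
      intro y hy
      have hev : G t =ᶠ[nhds y] fun z => α t + β t * Real.log z := by
        filter_upwards [isOpen_Ioi.mem_nhds hy] with z hz
        exact hGeq z hz
      rw [hev.deriv_eq]
      have := (((Real.hasDerivAt_log (ne_of_gt hy)).const_mul (β t)).const_add (α t)).deriv
      simpa using this
    have hev2 : (fun w =>
        (1 / σ t w) * deriv (fun u => σ u w) t +
          σ t w * deriv (fun z => (1 / 2) * deriv (σ t) z - μ t z / σ t z) w)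
        =ᶠ[nhds x] fun _ => deriv σt t / σt t - β t := by
      filter_upwards [isOpen_Ioi.mem_nhds hx] with w hw
      rw [hF t w hw, hG'eq w hw]
      have hw' : w ≠ 0 := ne_of_gt hw
      field_simp
    rw [hev2.deriv_eq, deriv_const]
end

section
/- Let κ > 0, σ > 0, α ∈ ℝ, x_0 ∈ ℝ, and let W̃ = (W̃_s)_{s≥0} be a standard Brownian motion. Define s(t) = σ²(e^{2κt} − 1)/(2κ), its inverse t(s) = (1/(2κ)) log(1 + 2κs/σ²), and the Ornstein-Uhlenbeck process X_t := α + e^{−κt}(x_0 − α + W̃_{s(t)}) for t ≥ 0 (the solution of dX_t = κ(α − X_t)dt + σ dW_t with X_0 = x_0). Then for any T > 0 and any functions a, b : [0,T] → ℝ with a(0) < x_0 < b(0), P(a(t) < X_t < b(t) for all t ∈ [0,T]) = P(c(s) < W̃_s < d(s) for all s ∈ [0,S]), where c(s) = α − x_0 + (a(t(s)) − α)·(1 + 2κs/σ²)^{1/2}, d(s) = α − x_0 + (b(t(s)) − α)·(1 + 2κs/σ²)^{1/2}, and S = σ²(e^{2κT} − 1)/(2κ). -/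
open MeasureTheory ProbabilityTheory Filter Set

/-- Boundary crossing probabilities for the Ornstein-Uhlenbeck process, reduced to
boundary crossing probabilities for a standard Brownian motion. -/
theorem bcp_ornstein_uhlenbeck
    {Ω : Type*} [MeasureSpace Ω] [IsProbabilityMeasure (ℙ : Measure Ω)]
    (κ σ α x₀ : ℝ) (hκ : 0 < κ) (hσ : 0 < σ)
    (W : ℝ → Ω → ℝ) (hW : IsStandardBM W)
    (s tinv : ℝ → ℝ)
    (hs : ∀ t : ℝ, s t = σ ^ 2 * (Real.exp (2 * κ * t) - 1) / (2 * κ))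
    (htinv : ∀ u : ℝ, tinv u = (1 / (2 * κ)) * Real.log (1 + 2 * κ * u / σ ^ 2))
    (X : ℝ → Ω → ℝ)
    (hX : ∀ (t : ℝ) (ω : Ω), X t ω = α + Real.exp (-κ * t) * (x₀ - α + W (s t) ω))
    (T : ℝ) (hT : 0 < T)
    (a b : ℝ → ℝ) (ha0 : a 0 < x₀) (hb0 : x₀ < b 0)
    (S : ℝ) (hS : S = σ ^ 2 * (Real.exp (2 * κ * T) - 1) / (2 * κ)) :
    ℙ {ω : Ω | ∀ t ∈ Set.Icc (0 : ℝ) T, a t < X t ω ∧ X t ω < b t} =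
      ℙ {ω : Ω | ∀ u ∈ Set.Icc (0 : ℝ) S,
        α - x₀ + (a (tinv u) - α) * Real.sqrt (1 + 2 * κ * u / σ ^ 2) < W u ω ∧
        W u ω < α - x₀ + (b (tinv u) - α) * Real.sqrt (1 + 2 * κ * u / σ ^ 2)} := by
  have hσ2 : (0:ℝ) < σ ^ 2 := by positivity
  have h2κ : (0:ℝ) < 2 * κ := by linarith
  have hsr : ∀ t : ℝ, 1 + 2 * κ * s t / σ ^ 2 = Real.exp (2 * κ * t) := by
    intro t; rw [hs]; field_simp; ring
  have hS' : S = s T := by rw [hS, hs]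
  have hsqrt : ∀ t : ℝ, Real.sqrt (1 + 2 * κ * s t / σ ^ 2) = Real.exp (κ * t) := by
    intro t
    rw [hsr, show (2:ℝ) * κ * t = κ * t + κ * t by ring, Real.exp_add,
      ← sq (Real.exp (κ * t))]
    exact Real.sqrt_sq (Real.exp_nonneg _)
  have htinvs : ∀ t : ℝ, tinv (s t) = t := by
    intro t
    rw [htinv, hsr, Real.log_exp]
    field_simp
  have hsmem : ∀ t ∈ Set.Icc (0:ℝ) T, s t ∈ Set.Icc (0:ℝ) S := by
    rintro t ⟨ht0, htT⟩
    constructor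
    · rw [hs]
      have h1 : (1:ℝ) ≤ Real.exp (2 * κ * t) := Real.one_le_exp (by positivity)
      apply div_nonneg _ h2κ.le
      nlinarith
    · rw [hs, hS]
      have h1 : Real.exp (2 * κ * t) ≤ Real.exp (2 * κ * T) :=
        Real.exp_le_exp.2 (by nlinarith)
      gcongr
  have hkey : ∀ u ∈ Set.Icc (0:ℝ) S, tinv u ∈ Set.Icc (0:ℝ) T ∧ s (tinv u) = u := by
    rintro u ⟨hu0, huS⟩
    have hr1 : (1:ℝ) ≤ 1 + 2 * κ * u / σ ^ 2 := by
      have : 0 ≤ 2 * κ * u / σ ^ 2 := by positivity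
      linarith
    have hr0 : (0:ℝ) < 1 + 2 * κ * u / σ ^ 2 := by linarith
    have hrT : 1 + 2 * κ * u / σ ^ 2 ≤ Real.exp (2 * κ * T) := by
      rw [← hsr T, ← hS']
      have h1 : 2 * κ * u / σ ^ 2 ≤ 2 * κ * S / σ ^ 2 := by gcongr
      linarith
    have hexp : Real.exp (2 * κ * tinv u) = 1 + 2 * κ * u / σ ^ 2 := by
      rw [htinv, show 2 * κ * (1 / (2 * κ) * Real.log (1 + 2 * κ * u / σ ^ 2))
          = Real.log (1 + 2 * κ * u / σ ^ 2) by field_simp]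
      exact Real.exp_log hr0
    have hstu : s (tinv u) = u := by
      have h3 := hsr (tinv u)
      rw [hexp] at h3
      have h4 : 2 * κ * s (tinv u) / σ ^ 2 = 2 * κ * u / σ ^ 2 := by linarith
      have h5 : 2 * κ * s (tinv u) * σ ^ 2 = 2 * κ * u * σ ^ 2 :=
        (div_eq_div_iff (ne_of_gt hσ2) (ne_of_gt hσ2)).mp h4
      have h6 : 2 * κ * s (tinv u) = 2 * κ * u :=
        mul_right_cancel₀ (ne_of_gt hσ2) h5
      exact mul_left_cancel₀ (ne_of_gt h2κ) h6
    refine ⟨⟨?_, ?_⟩, hstu⟩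
    · rw [htinv]
      have : 0 ≤ Real.log (1 + 2 * κ * u / σ ^ 2) := Real.log_nonneg hr1
      positivity
    · rw [htinv]
      have hlog : Real.log (1 + 2 * κ * u / σ ^ 2) ≤ 2 * κ * T := by
        calc Real.log (1 + 2 * κ * u / σ ^ 2) ≤ Real.log (Real.exp (2 * κ * T)) :=
              Real.log_le_log hr0 hrT
          _ = 2 * κ * T := Real.log_exp _
      rw [div_mul_eq_mul_div, one_mul, div_le_iff₀ h2κ]
      linarith [hlog]
  have halg : ∀ (t v y : ℝ),
      (y < α + Real.exp (-κ * t) * (x₀ - α + v) ↔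
        α - x₀ + (y - α) * Real.exp (κ * t) < v) := by
    intro t v y
    have hE : (0:ℝ) < Real.exp (κ * t) := Real.exp_pos _
    have hinv : Real.exp (-κ * t) = (Real.exp (κ * t))⁻¹ := by
      rw [← Real.exp_neg]; ring_nf
    rw [hinv, inv_mul_eq_div]
    constructor
    · intro h
      have h1 : (y - α) * Real.exp (κ * t) < x₀ - α + v :=
        (lt_div_iff₀ hE).mp (by linarith)
      linarith
    · intro h
      have h1 : (y - α) * Real.exp (κ * t) < x₀ - α + v := by linarith
      have := (lt_div_iff₀ hE).mpr h1
      linarith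
  have halg' : ∀ (t v y : ℝ),
      (α + Real.exp (-κ * t) * (x₀ - α + v) < y ↔
        v < α - x₀ + (y - α) * Real.exp (κ * t)) := by
    intro t v y
    have hE : (0:ℝ) < Real.exp (κ * t) := Real.exp_pos _
    have hinv : Real.exp (-κ * t) = (Real.exp (κ * t))⁻¹ := by
      rw [← Real.exp_neg]; ring_nf
    rw [hinv, inv_mul_eq_div]
    constructor
    · intro h
      have h1 : x₀ - α + v < (y - α) * Real.exp (κ * t) :=
        (div_lt_iff₀ hE).mp (by linarith)
      linarith
    · intro h
      have h1 : x₀ - α + v < (y - α) * Real.exp (κ * t) := by linarith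
      have := (div_lt_iff₀ hE).mpr h1
      linarith
  congr 1
  ext ω
  simp only [Set.mem_setOf_eq]
  constructor
  · intro h u hu
    obtain ⟨htmem, hstu⟩ := hkey u hu
    obtain ⟨h1, h2⟩ := h (tinv u) htmem
    rw [hX, hstu] at h1 h2
    have hq : Real.sqrt (1 + 2 * κ * u / σ ^ 2) = Real.exp (κ * tinv u) := by
      calc Real.sqrt (1 + 2 * κ * u / σ ^ 2)
          = Real.sqrt (1 + 2 * κ * s (tinv u) / σ ^ 2) := by rw [hstu]
        _ = Real.exp (κ * tinv u) := hsqrt _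
    rw [hq]
    exact ⟨(halg _ _ _).1 h1, (halg' _ _ _).1 h2⟩
  · intro h t ht
    obtain ⟨h1, h2⟩ := h (s t) (hsmem t ht)
    rw [htinvs, hsqrt] at h1 h2
    rw [hX]
    exact ⟨(halg _ _ _).2 h1, (halg' _ _ _).2 h2⟩
end
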